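/- Let p, q be natural numbers, let F : ℝᵖ × ℝ^q → ℝ be twice continuously differentiable and g : ℝᵖ → ℝ^q continuously differentiable, and suppose the identity ∇_u F(α, g(α)) = 0 holds for all α ∈ ℝᵖ, where ∇_u F denotes the partial gradient in the second argument. Fix α ∈ ℝᵖ and write the Hessian of F at (α, g(α)) in block form with blocks H_{αα} (p × p), H_{αu} (p × q), H_{uα} = H_{αu}ᵀ (q × p) and H_{uu} (q × q), and assume H_{uu} is invertible. Then the reduced objective F̄(α) = F(α, g(α)) is twice differentiable at α, the derivative of g satisfies Dg(α) = −H_{uu}^{-1} H_{uα}, and the Hessian of F̄ at α equals H_{αα} − H_{αu} H_{uu}^{-1} H_{uα}. -/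

import Mathlib

open Matrix

/-- **Reduced-Hessian (Schur complement) formula, equation (12).**
Let `F : ℝᵖ × ℝ^q → ℝ` be `C²`, `g : ℝᵖ → ℝ^q` be `C¹`, and suppose the stationarity
identity `∇_u F(α, g(α)) = 0` holds for all `α`. Fix `α`, and let `Hαα`, `Hαu`, `Huu`
be the blocks of the Hessian of `F` at `(α, g(α))` (with `Huα = Hαuᵀ`), `Huu`
invertible. Then the reduced objective `F̄(a) = F(a, g(a))` is twice differentiable
at `α`, `Dg(α) = −Huu⁻¹ Huα`, and the Hessian of `F̄` at `α` is
`Hαα − Hαu Huu⁻¹ Huα`. -/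
theorem reduced_hessian_schur (p q : ℕ)
    (F : (Fin p → ℝ) × (Fin q → ℝ) → ℝ) (g : (Fin p → ℝ) → (Fin q → ℝ))
    (hF : ContDiff ℝ 2 F) (hg : ContDiff ℝ 1 g)
    (hstat : ∀ a, fderiv ℝ (fun u => F (a, u)) (g a) = 0)
    (α : Fin p → ℝ)
    (Hαα : Matrix (Fin p) (Fin p) ℝ) (Hαu : Matrix (Fin p) (Fin q) ℝ)
    (Huu : Matrix (Fin q) (Fin q) ℝ)
    (hHαα : ∀ i j, Hαα i j =
      fderiv ℝ (fderiv ℝ F) (α, g α) (Pi.single i 1, 0) (Pi.single j 1, 0))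
    (hHαu : ∀ i j, Hαu i j =
      fderiv ℝ (fderiv ℝ F) (α, g α) (Pi.single i 1, 0) (0, Pi.single j 1))
    (hHuu : ∀ i j, Huu i j =
      fderiv ℝ (fderiv ℝ F) (α, g α) (0, Pi.single i 1) (0, Pi.single j 1))
    (hinv : IsUnit Huu) :
    DifferentiableAt ℝ (fun a => F (a, g a)) α ∧
    DifferentiableAt ℝ (fderiv ℝ (fun a => F (a, g a))) α ∧
    (∀ i j, fderiv ℝ g α (Pi.single j 1) i = (-(Huu⁻¹ * Hαuᵀ)) i j) ∧
    (∀ i j, fderiv ℝ (fderiv ℝ (fun a => F (a, g a))) α (Pi.single i 1) (Pi.single j 1) =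
      (Hαα - Hαu * Huu⁻¹ * Hαuᵀ) i j) := by
  classical
  have hFd : Differentiable ℝ F := hF.differentiable (by norm_num)
  have hF'c : ContDiff ℝ 1 (fderiv ℝ F) := hF.fderiv_right (by norm_num)
  have hF'd : Differentiable ℝ (fderiv ℝ F) := hF'c.differentiable one_ne_zero
  have hgd : Differentiable ℝ g := hg.differentiable one_ne_zero
  have hφ : ∀ a : Fin p → ℝ, HasFDerivAt (fun a : Fin p → ℝ => (a, g a))
      ((ContinuousLinearMap.id ℝ (Fin p → ℝ)).prod (fderiv ℝ g a)) a :=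
    fun a => HasFDerivAt.prodMk (hasFDerivAt_id a) (hgd a).hasFDerivAt
  set B := fderiv ℝ (fderiv ℝ F) (α, g α) with hBdef
  set D := fderiv ℝ g α with hDdef
  -- stationarity pointwise
  have hstat' : ∀ (a : Fin p → ℝ) (w : Fin q → ℝ), fderiv ℝ F (a, g a) (0, w) = 0 := by
    intro a w
    have h1 : HasFDerivAt (fun u => F (a, u))
        ((fderiv ℝ F (a, g a)).comp (ContinuousLinearMap.inr ℝ (Fin p → ℝ) (Fin q → ℝ))) (g a) :=
      (hFd (a, g a)).hasFDerivAt.comp (g a) (hasFDerivAt_prodMk_right a (g a))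
    have h2 := h1.fderiv
    rw [hstat a] at h2
    have h3 := congrArg (fun L : (Fin q → ℝ) →L[ℝ] ℝ => L w) h2
    simpa using h3.symm
  -- derivative of the reduced objective
  have hbar : ∀ a : Fin p → ℝ, HasFDerivAt (fun a => F (a, g a))
      ((fderiv ℝ F (a, g a)).comp (ContinuousLinearMap.inl ℝ (Fin p → ℝ) (Fin q → ℝ))) a := by
    intro a
    have h1 : HasFDerivAt (fun a : Fin p → ℝ => F (a, g a))
        ((fderiv ℝ F (a, g a)).comp ((ContinuousLinearMap.id ℝ (Fin p → ℝ)).prod (fderiv ℝ g a))) a :=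
      (hFd (a, g a)).hasFDerivAt.comp a (hφ a)
    convert h1 using 1
    refine ContinuousLinearMap.ext fun v => ?_
    simp only [ContinuousLinearMap.comp_apply, ContinuousLinearMap.inl_apply,
      ContinuousLinearMap.prod_apply, ContinuousLinearMap.coe_id', id_eq]
    have h2 : ((v, fderiv ℝ g a v) : (Fin p → ℝ) × (Fin q → ℝ)) = (v, 0) + (0, fderiv ℝ g a v) := by
      simp
    rw [h2, map_add, hstat', add_zero]
  have hfderiv_bar : fderiv ℝ (fun a => F (a, g a))
      = fun a => (fderiv ℝ F (a, g a)).comp (ContinuousLinearMap.inl ℝ (Fin p → ℝ) (Fin q → ℝ)) :=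
    funext fun a => (hbar a).fderiv
  -- derivative of a ↦ fderiv F (a, g a)
  have hB1 : HasFDerivAt (fun a : Fin p → ℝ => fderiv ℝ F (a, g a))
      (B.comp ((ContinuousLinearMap.id ℝ (Fin p → ℝ)).prod D)) α :=
    (hF'd (α, g α)).hasFDerivAt.comp α (hφ α)
  set A := (ContinuousLinearMap.compL ℝ (Fin p → ℝ) ((Fin p → ℝ) × (Fin q → ℝ)) ℝ).flip
      (ContinuousLinearMap.inl ℝ (Fin p → ℝ) (Fin q → ℝ)) with hAdef
  have hKd : HasFDerivAt
      (fun a : Fin p → ℝ => (fderiv ℝ F (a, g a)).comp (ContinuousLinearMap.inl ℝ (Fin p → ℝ) (Fin q → ℝ)))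
      (A.comp (B.comp ((ContinuousLinearMap.id ℝ (Fin p → ℝ)).prod D))) α := by
    exact A.hasFDerivAt.comp α hB1
  -- key: second derivative of reduced objective applied
  have hsnd : fderiv ℝ (fderiv ℝ (fun a => F (a, g a))) α
      = A.comp (B.comp ((ContinuousLinearMap.id ℝ (Fin p → ℝ)).prod D)) := by
    rw [hfderiv_bar]; exact hKd.fderiv
  have hsnd' : ∀ (v w : Fin p → ℝ),
      fderiv ℝ (fderiv ℝ (fun a => F (a, g a))) α v w = B (v, D v) (w, 0) := by
    intro v w; rw [hsnd]; rfl
  -- differentiating stationarity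
  set A' := (ContinuousLinearMap.compL ℝ (Fin q → ℝ) ((Fin p → ℝ) × (Fin q → ℝ)) ℝ).flip
      (ContinuousLinearMap.inr ℝ (Fin p → ℝ) (Fin q → ℝ)) with hA'def
  have hkey : ∀ (v : Fin p → ℝ) (w : Fin q → ℝ), B (v, D v) (0, w) = 0 := by
    intro v w
    have h1 : HasFDerivAt (fun a : Fin p → ℝ => A' (fderiv ℝ F (a, g a)))
        (A'.comp (B.comp ((ContinuousLinearMap.id ℝ (Fin p → ℝ)).prod D))) α :=
      A'.hasFDerivAt.comp α hB1
    have h0 : (fun a : Fin p → ℝ => A' (fderiv ℝ F (a, g a)))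
        = fun _ => (0 : (Fin q → ℝ) →L[ℝ] ℝ) := by
      funext a
      refine ContinuousLinearMap.ext fun u => ?_
      simpa [hA'def] using hstat' a u
    rw [h0] at h1
    have h2 : (A'.comp (B.comp ((ContinuousLinearMap.id ℝ (Fin p → ℝ)).prod D)))
        = 0 := h1.unique (hasFDerivAt_const _ α)
    have h3 := congrArg (fun L => L v w) h2
    simpa [hA'def] using h3
  -- symmetry of the second derivative
  have hsymm : ∀ v w, B v w = B w v := fun v w =>
    second_derivative_symmetric (fun y => (hFd y).hasFDerivAt) ((hF'd (α, g α)).hasFDerivAt) v w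
  -- expansion of B (0, w) ξ
  have hexp : ∀ (w : Fin q → ℝ) (ξ : (Fin p → ℝ) × (Fin q → ℝ)),
      B (0, w) ξ = ∑ k, w k * B (0, Pi.single k 1) ξ := by
    intro w ξ
    have hw : ((0 : Fin p → ℝ), w)
        = ∑ k, w k • (((0 : Fin p → ℝ), Pi.single k 1) : (Fin p → ℝ) × (Fin q → ℝ)) := by
      have h : w = ∑ k, w k • (Pi.single k 1 : Fin q → ℝ) := by ext j; simp [Pi.single_apply]
      rw [Prod.ext_iff]
      constructor
      · simp [Prod.fst_sum]
      · simp only [Prod.snd_sum, Prod.smul_mk]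
        exact h
    rw [hw, map_sum, ContinuousLinearMap.sum_apply]
    refine Finset.sum_congr rfl fun k _ => ?_
    rw [_root_.map_smul]
    simp
  have hsplit : ∀ (v : Fin p → ℝ),
      ((v, D v) : (Fin p → ℝ) × (Fin q → ℝ)) = (v, 0) + (0, D v) := by
    intro v; simp
  -- the key linear system for D
  have hmul : ∀ j, Huu.mulVec (D (Pi.single j 1)) = fun i => -(Hαuᵀ i j) := by
    intro j
    funext i
    have h1 : B (Pi.single j 1, D (Pi.single j 1)) (0, Pi.single i 1) = 0 := hkey _ _
    rw [hsplit, map_add, ContinuousLinearMap.add_apply, hexp] at h1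
    have h2 : Huu.mulVec (D (Pi.single j 1)) i
        = ∑ k, D (Pi.single j 1) k * B (0, Pi.single k 1) (0, Pi.single i 1) := by
      rw [Matrix.mulVec, dotProduct]
      refine Finset.sum_congr rfl fun k _ => ?_
      rw [hHuu i k, hsymm, mul_comm]
    rw [h2]
    have h3 : B ((Pi.single j 1 : Fin p → ℝ), 0) (0, Pi.single i 1) = Hαu j i := (hHαu j i).symm
    rw [Matrix.transpose_apply]
    linarith [h1, h3]
  have hdet : IsUnit Huu.det := (Matrix.isUnit_iff_isUnit_det Huu).mp hinv
  have hDval : ∀ i j, D (Pi.single j 1) i = (-(Huu⁻¹ * Hαuᵀ)) i j := by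
    intro i j
    have h4 : Huu⁻¹ * Huu = 1 := Matrix.nonsing_inv_mul Huu hdet
    have h5 : D (Pi.single j 1) = Huu⁻¹.mulVec (Huu.mulVec (D (Pi.single j 1))) := by
      rw [Matrix.mulVec_mulVec, h4, Matrix.one_mulVec]
    rw [h5, hmul j]
    simp [Matrix.mulVec, dotProduct, Matrix.mul_apply, mul_neg, Finset.sum_neg_distrib]
  -- symmetry of the Schur term
  have hHuuSymm : Huuᵀ = Huu := by
    ext k l
    rw [Matrix.transpose_apply, hHuu, hHuu]
    exact hsymm _ _
  have hsymM : (Hαu * Huu⁻¹ * Hαuᵀ)ᵀ = Hαu * Huu⁻¹ * Hαuᵀ := by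
    rw [Matrix.transpose_mul, Matrix.transpose_mul, Matrix.transpose_transpose,
      Matrix.transpose_nonsing_inv, hHuuSymm, ← Matrix.mul_assoc]
  refine ⟨(hbar α).differentiableAt, ?_, hDval, ?_⟩
  · rw [hfderiv_bar]; exact hKd.differentiableAt
  · intro i j
    rw [hsnd' (Pi.single i 1) (Pi.single j 1), hsplit, map_add,
      ContinuousLinearMap.add_apply, hexp]
    have hBk : ∀ k, B ((0 : Fin p → ℝ), Pi.single k 1) (Pi.single j 1, 0) = Hαu j k := by
      intro k; rw [hsymm]; exact (hHαu j k).symm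
    have hsum : ∑ k, D (Pi.single i 1) k * B ((0 : Fin p → ℝ), Pi.single k 1) (Pi.single j 1, 0)
        = -(Hαu * Huu⁻¹ * Hαuᵀ) j i := by
      have : ∀ k, D (Pi.single i 1) k * B ((0 : Fin p → ℝ), Pi.single k 1) (Pi.single j 1, 0)
          = -(Hαu j k * (Huu⁻¹ * Hαuᵀ) k i) := by
        intro k
        rw [hBk k, hDval k i]
        simp [mul_comm]
      rw [Finset.sum_congr rfl fun k _ => this k]
      rw [Matrix.mul_assoc, Matrix.mul_apply (M := Hαu) (N := Huu⁻¹ * Hαuᵀ)]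
      simp
    rw [hsum]
    have hMji : (Hαu * Huu⁻¹ * Hαuᵀ) j i = (Hαu * Huu⁻¹ * Hαuᵀ) i j := by
      conv_lhs => rw [← hsymM]
      rw [Matrix.transpose_apply]
    rw [hMji, ← hHαα i j, Matrix.sub_apply]
    ring
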